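/- Let w ∈ ℝⁿ be nonincreasing (w_1 ≥ w_2 ≥ … ≥ w_n) and let C(w) ⊆ ℝⁿ denote the permutahedron generated by w. Then for every y ∈ ℝⁿ, OWA_w(y) = min_{z ∈ C(w)} ⟨z, y⟩, where ⟨·,·⟩ is the standard Euclidean inner product. -/
import Mathlib

/-- The vector `y` sorted in nondecreasing order. -/
noncomputable def sortVec {n : ℕ} (y : Fin n → ℝ) : Fin n → ℝ :=
  y ∘ Tuple.sort y

/-- The ordered weighted average of `y` with weights `w`. -/
noncomputable def OWA {n : ℕ} (w y : Fin n → ℝ) : ℝ :=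
  ∑ k, w k * sortVec y k

/-- The permutahedron generated by `w`: the convex hull of all coordinate
permutations of `w`. -/
noncomputable def permutahedron {n : ℕ} (w : Fin n → ℝ) : Set (Fin n → ℝ) :=
  convexHull ℝ {z : Fin n → ℝ | ∃ σ : Equiv.Perm (Fin n), z = w ∘ σ}

/-- With nonincreasing weights, `OWA w y` equals the (attained) minimum of the inner
product `⟨z, y⟩` over the permutahedron generated by `w`. -/
theorem owa_eq_min_over_permutahedron {n : ℕ} (w : Fin n → ℝ) (hw : Antitone w)
    (y : Fin n → ℝ) :
    IsLeast {v : ℝ | ∃ z ∈ permutahedron w, v = ∑ i, z i * y i} (OWA w y) := by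
  have hmono : Monotone (sortVec y) := Tuple.monotone_sort y
  have hanti : Antivary w (sortVec y) := by
    intro i j hij
    rcases le_or_gt j i with h | h
    · exact absurd (hmono h) (not_le.2 hij)
    · exact hw h.le
  constructor
  · refine ⟨w ∘ (Tuple.sort y).symm, subset_convexHull ℝ _ ⟨(Tuple.sort y).symm, rfl⟩, ?_⟩
    rw [OWA, ← Equiv.sum_comp (Tuple.sort y)
      (fun i => (w ∘ (Tuple.sort y).symm) i * y i)]
    simp [sortVec]
  · rintro v ⟨z, hz, rfl⟩
    have hconv : Convex ℝ {z : Fin n → ℝ | OWA w y ≤ ∑ i, z i * y i} := by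
      refine convex_halfSpace_ge ?_ _
      exact ⟨fun a b => by simp [add_mul, Finset.sum_add_distrib],
        fun c a => by simp [Finset.mul_sum, mul_assoc]⟩
    refine convexHull_min ?_ hconv hz
    rintro z ⟨σ, rfl⟩
    show OWA w y ≤ ∑ i, w (σ i) * y i
    have : ∑ i, w (σ i) * y i = ∑ k, w k * y (σ.symm k) := by
      simpa using (Equiv.sum_comp σ (fun k => w k * y (σ.symm k)))
    rw [this]
    have hy : ∀ k, y (σ.symm k) = sortVec y ((Tuple.sort y).symm (σ.symm k)) := by
      intro k; simp [sortVec]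
    simp_rw [hy]
    have := hanti.sum_smul_le_sum_smul_comp_perm (σ := σ.symm.trans (Tuple.sort y).symm)
    simpa [OWA, smul_eq_mul] using this
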